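/- Let Λ be a row-finite k-graph with no sources. If Λ is not aperiodic, then there exist a vertex v, distinct m, n ∈ ℕ^k, and for every infinite path x ∈ vΛ^∞ the shift identities σ^m(x) = σ^n(x) hold; consequently the infinite-path representation π_S of C*(Λ) on ℓ²(Λ^∞) is not injective (the element s_λ s_λ* − s_μ s_ν* s_λ s_λ*, for λ ∈ vΛ^{m∨n}, μ = λ(0,m), ν = λ(0,n), is a nonzero element of ker π_S). -/

import Mathlib

namespace Paper


/-- A `k`-graph structure on object type `Obj` and morphism type `Hom`:
a countable category with a degree functor to `ℕ^k` satisfying the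
unique factorisation property.  `comp μ ν` is the composite "μ then ν",
meaningful when `src μ = rng ν`. -/
structure KGraph (k : ℕ) (Obj Hom : Type) where
  src : Hom → Obj
  rng : Hom → Obj
  comp : Hom → Hom → Hom
  idm : Obj → Hom
  d : Hom → Fin k → ℕ
  countObj : Countable Obj
  countHom : Countable Hom
  src_comp : ∀ μ ν, src μ = rng ν → src (comp μ ν) = src ν
  rng_comp : ∀ μ ν, src μ = rng ν → rng (comp μ ν) = rng μ
  comp_assoc : ∀ l μ ν, src l = rng μ → src μ = rng ν →
    comp (comp l μ) ν = comp l (comp μ ν)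
  src_idm : ∀ v, src (idm v) = v
  rng_idm : ∀ v, rng (idm v) = v
  comp_idm : ∀ μ, comp μ (idm (src μ)) = μ
  idm_comp : ∀ μ, comp (idm (rng μ)) μ = μ
  d_comp : ∀ μ ν, src μ = rng ν → d (comp μ ν) = d μ + d ν
  d_idm : ∀ v, d (idm v) = 0
  factor : ∀ (lam : Hom) (m n : Fin k → ℕ), d lam = m + n →
    ∃! p : Hom × Hom, src p.1 = rng p.2 ∧ comp p.1 p.2 = lam ∧ d p.1 = m ∧ d p.2 = n

variable {k : ℕ} {Obj Hom : Type}

/-- `IsSegment Λ lam seg p q` says that `seg = lam(p,q)`, i.e. `seg` is the middle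
factor of `lam` in a factorisation `lam = a ⬝ seg ⬝ b` with `d a = p`, `d seg = q - p`. -/
def IsSegment (Λ : KGraph k Obj Hom) (lam seg : Hom) (p q : Fin k → ℕ) : Prop :=
  ∃ a b : Hom, Λ.src a = Λ.rng seg ∧ Λ.src seg = Λ.rng b ∧
    Λ.comp a (Λ.comp seg b) = lam ∧ Λ.d a = p ∧ Λ.d seg = q - p

/-- Aperiodicity in the finite-path formulation of Robertson–Sims. -/
def Aperiodic (Λ : KGraph k Obj Hom) : Prop :=
  ∀ (v : Obj) (m n : Fin k → ℕ), m ≠ n → ∃ lam : Hom,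
    Λ.rng lam = v ∧ m ⊔ n ≤ Λ.d lam ∧
    ∀ s1 s2 : Hom, IsSegment Λ lam s1 m (m + (Λ.d lam - (m ⊔ n))) →
      IsSegment Λ lam s2 n (n + (Λ.d lam - (m ⊔ n))) → s1 ≠ s2

def NoSources (Λ : KGraph k Obj Hom) : Prop :=
  ∀ (v : Obj) (i : Fin k), ∃ h : Hom, Λ.rng h = v ∧ Λ.d h = Pi.single i 1

def RowFinite (Λ : KGraph k Obj Hom) : Prop :=
  ∀ (v : Obj) (i : Fin k), {h : Hom | Λ.rng h = v ∧ Λ.d h = Pi.single i 1}.Finite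

def Cofinal (Λ : KGraph k Obj Hom) : Prop :=
  ∀ v w : Obj, ∃ n : Fin k → ℕ, ∀ lam : Hom, Λ.rng lam = w → Λ.d lam = n →
    ∃ μ : Hom, Λ.rng μ = v ∧ Λ.src μ = Λ.src lam

/-- A degree-preserving functor between `k`-graphs. -/
structure KFunctor {O H O' H' : Type} (Λ : KGraph k O H) (Γ : KGraph k O' H') where
  onObj : O → O'
  onHom : H → H'
  rng_comm : ∀ h, Γ.rng (onHom h) = onObj (Λ.rng h)
  src_comm : ∀ h, Γ.src (onHom h) = onObj (Λ.src h)
  idm_comm : ∀ v, onHom (Λ.idm v) = Γ.idm (onObj v)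
  comp_comm : ∀ μ ν, Λ.src μ = Λ.rng ν → onHom (Λ.comp μ ν) = Γ.comp (onHom μ) (onHom ν)
  d_comm : ∀ h, Γ.d (onHom h) = Λ.d h

/-- An infinite path in a `k`-graph: a `k`-graph morphism from `Ω_k`. -/
structure InfPath (Λ : KGraph k Obj Hom) where
  vert : (Fin k → ℕ) → Obj
  seg : ∀ p q : Fin k → ℕ, p ≤ q → Hom
  rng_seg : ∀ p q h, Λ.rng (seg p q h) = vert p
  src_seg : ∀ p q h, Λ.src (seg p q h) = vert q
  d_seg : ∀ p q h, Λ.d (seg p q h) = q - p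
  comp_seg : ∀ p q r (h1 : p ≤ q) (h2 : q ≤ r),
    Λ.comp (seg p q h1) (seg q r h2) = seg p r (h1.trans h2)

/-- The shift `σ^p` on infinite paths. -/
def InfPath.shift (Λ : KGraph k Obj Hom) (p : Fin k → ℕ) (x : InfPath Λ) : InfPath Λ where
  vert q := x.vert (p + q)
  seg q r h := x.seg (p + q) (p + r) (add_le_add le_rfl h)
  rng_seg q r h := x.rng_seg _ _ _
  src_seg q r h := x.src_seg _ _ _
  d_seg q r h := by
    rw [x.d_seg]
    funext i
    simp [Nat.add_sub_add_left]
  comp_seg q r t h1 h2 := x.comp_seg _ _ _ _ _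


/-- A Cuntz–Krieger `Λ`-family in a ring `B` with involution: a family of
partial isometries indexed by the paths of `Λ` satisfying (CK1)–(CK4).
The sum relation (CK4) is stated for any finite enumeration of `vΛ^m`. -/
structure IsCKFamily {Obj Hom : Type} (Λ : KGraph k Obj Hom)
    {B : Type} [Ring B] [StarRing B] (t : Hom → B) : Prop where
  partial_isometry : ∀ lam : Hom, t lam * star (t lam) * t lam = t lam
  idem : ∀ v : Obj, t (Λ.idm v) * t (Λ.idm v) = t (Λ.idm v)
  selfadj : ∀ v : Obj, star (t (Λ.idm v)) = t (Λ.idm v)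
  orth : ∀ v w : Obj, v ≠ w → t (Λ.idm v) * t (Λ.idm w) = 0
  mul_eq : ∀ μ ν : Hom, Λ.src μ = Λ.rng ν → t (Λ.comp μ ν) = t μ * t ν
  star_mul_self : ∀ lam : Hom, star (t lam) * t lam = t (Λ.idm (Λ.src lam))
  sum_rel : ∀ (v : Obj) (m : Fin k → ℕ) (S : Finset Hom),
    (∀ h : Hom, h ∈ S ↔ (Λ.rng h = v ∧ Λ.d h = m)) →
    t (Λ.idm v) = ∑ h ∈ S, t h * star (t h)

/-- `ExtendsTo Λ lam x y` says that `y = λ·x` is the extension of the infinite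
path `x` by the finite path `lam` (requires `s(λ) = r(x)`). -/
def ExtendsTo {Obj Hom : Type} (Λ : KGraph k Obj Hom) (lam : Hom)
    (x y : InfPath Λ) : Prop :=
  y.vert 0 = Λ.rng lam ∧
  ∀ q : Fin k → ℕ,
    y.seg 0 (Λ.d lam + q) zero_le = Λ.comp lam (x.seg 0 q zero_le)

section Helpers

variable {Λ : KGraph k Obj Hom}

theorem seg_congr (x : InfPath Λ) {p q p' q' : Fin k → ℕ} (hp : p = p') (hq : q = q')
    (h : p ≤ q) (h' : p' ≤ q') : x.seg p q h = x.seg p' q' h' := by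
  subst hp; subst hq; rfl

theorem InfPath.ext' {x y : InfPath Λ} (hv : x.vert = y.vert)
    (hs : ∀ p q h, x.seg p q h = y.seg p q h) : x = y := by
  cases x; cases y
  have hs' : ∀ p q h, _ = _ := hs
  simp only at hv hs'
  subst hv
  have : _ = _ := funext fun p => funext fun q => funext fun h => hs' p q h
  subst this
  rfl

theorem eq_idm_of_d_eq_zero {a : Hom} (ha : Λ.d a = 0) : a = Λ.idm (Λ.rng a) := by
  obtain ⟨p, _, hu⟩ := Λ.factor a 0 0 (by simpa using ha)
  have h1 : (Λ.idm (Λ.rng a), a) = p :=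
    hu _ ⟨by rw [Λ.src_idm], by rw [Λ.idm_comp], Λ.d_idm _, ha⟩
  have h2 : (a, Λ.idm (Λ.src a)) = p :=
    hu _ ⟨by rw [Λ.rng_idm], by rw [Λ.comp_idm], ha, Λ.d_idm _⟩
  have := h1.trans h2.symm
  exact (congrArg Prod.fst this).symm

theorem factor_unique {lam a b a' b' : Hom}
    (h1 : Λ.src a = Λ.rng b) (h2 : Λ.comp a b = lam)
    (h1' : Λ.src a' = Λ.rng b') (h2' : Λ.comp a' b' = lam)
    (hda : Λ.d a = Λ.d a') (hdb : Λ.d b = Λ.d b') :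
    a = a' ∧ b = b' := by
  obtain ⟨p, _, hu⟩ := Λ.factor lam (Λ.d a) (Λ.d b)
    (by rw [← h2, Λ.d_comp _ _ h1])
  have e1 : (a, b) = p := hu _ ⟨h1, h2, rfl, rfl⟩
  have e2 : (a', b') = p := hu _ ⟨h1', h2', hda.symm, hdb.symm⟩
  have := e1.trans e2.symm
  exact ⟨congrArg Prod.fst this, congrArg Prod.snd this⟩

theorem comp3_unique {a e b a' e' b' : Hom}
    (sa : Λ.src a = Λ.rng e) (se : Λ.src e = Λ.rng b)
    (sa' : Λ.src a' = Λ.rng e') (se' : Λ.src e' = Λ.rng b')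
    (heq : Λ.comp a (Λ.comp e b) = Λ.comp a' (Λ.comp e' b'))
    (ha : Λ.d a = Λ.d a') (he : Λ.d e = Λ.d e') :
    a = a' ∧ e = e' ∧ b = b' := by
  have hb : Λ.d b = Λ.d b' := by
    have h := congrArg Λ.d heq
    rw [Λ.d_comp _ _ (by rw [sa, Λ.rng_comp _ _ se]), Λ.d_comp _ _ se,
      Λ.d_comp _ _ (by rw [sa', Λ.rng_comp _ _ se']), Λ.d_comp _ _ se', ha, he] at h
    exact add_left_cancel (add_left_cancel h)
  obtain ⟨h1, h2⟩ := factor_unique (a := a) (b := Λ.comp e b)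
    (by rw [sa, Λ.rng_comp _ _ se]) heq
    (by rw [sa', Λ.rng_comp _ _ se']) rfl ha
    (by rw [Λ.d_comp _ _ se, Λ.d_comp _ _ se', he, hb])
  obtain ⟨h3, h4⟩ := factor_unique se h2 se' rfl he hb
  exact ⟨h1, h3, h4⟩

theorem pi_add_sub {p q : Fin k → ℕ} (h : p ≤ q) : p + (q - p) = q :=
  funext fun i => Nat.add_sub_cancel' (h i)

theorem pi_sub_zero (q : Fin k → ℕ) : q - 0 = q :=
  funext fun i => Nat.sub_zero (q i)

theorem pi_add_sub_left (p q : Fin k → ℕ) : (p + q) - p = q :=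
  funext fun i => by simp

theorem pi_add_sub_right (p q : Fin k → ℕ) : (p + q) - q = p :=
  funext fun i => by simp

section Extend

variable (lam : Hom) (z : InfPath Λ)

/-- The finite path `λ · z(0,q)`. -/
def big (q : Fin k → ℕ) : Hom := Λ.comp lam (z.seg 0 q zero_le)

theorem src_lam_rng (hz : z.vert 0 = Λ.src lam) (q : Fin k → ℕ) : Λ.src lam = Λ.rng (z.seg 0 q zero_le) := by
  rw [z.rng_seg, hz]

theorem d_big (hz : z.vert 0 = Λ.src lam) (q : Fin k → ℕ) : Λ.d (big lam z q) = Λ.d lam + q := by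
  rw [big, Λ.d_comp _ _ (src_lam_rng lam z hz q), z.d_seg, pi_sub_zero]

theorem big_comp (hz : z.vert 0 = Λ.src lam) {q r : Fin k → ℕ} (h : q ≤ r) :
    Λ.comp (big lam z q) (z.seg q r h) = big lam z r := by
  rw [big, big, Λ.comp_assoc _ _ _ (src_lam_rng lam z hz q)
    (by rw [z.src_seg, z.rng_seg]), z.comp_seg]

/-- `e` is the segment of `λ·z` over the interval `[p,q]`. -/
def ExtPred (p q : Fin k → ℕ) (e : Hom) : Prop :=
  ∃ a b : Hom, Λ.src a = Λ.rng e ∧ Λ.src e = Λ.rng b ∧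
    Λ.comp a (Λ.comp e b) = big lam z q ∧ Λ.d a = p ∧ Λ.d e = q - p ∧ Λ.d b = Λ.d lam

theorem extPred_uniq {p q : Fin k → ℕ} {e e' : Hom}
    (he : ExtPred lam z p q e) (he' : ExtPred lam z p q e') : e = e' := by
  obtain ⟨a, b, sa, se, hc, hda, hde, _⟩ := he
  obtain ⟨a', b', sa', se', hc', hda', hde', _⟩ := he'
  exact (comp3_unique sa se sa' se' (hc.trans hc'.symm) (hda.trans hda'.symm)
    (hde.trans hde'.symm)).2.1

theorem extPred_exists (hz : z.vert 0 = Λ.src lam) {p q : Fin k → ℕ} (hpq : p ≤ q) : ∃ e, ExtPred lam z p q e := by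
  have hple : p ≤ Λ.d lam + q := le_trans hpq le_add_self
  obtain ⟨pr, ⟨hs1, hc1, hda, hdc⟩, -⟩ := Λ.factor (big lam z q) p ((Λ.d lam + q) - p)
    (by rw [d_big lam z hz q]; exact (pi_add_sub hple).symm)
  obtain ⟨pr2, ⟨hs2, hc2, hde, hdb⟩, -⟩ := Λ.factor pr.2 (q - p) (Λ.d lam)
    (by rw [hdc]; funext i; have h1 : p i ≤ q i := hpq i; simp only [Pi.add_apply, Pi.sub_apply]; omega)
  exact ⟨pr2.1, pr.1, pr2.2, by rw [hs1, ← hc2, Λ.rng_comp _ _ hs2], hs2,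
    by rw [hc2, hc1], hda, hde, hdb⟩

/-- The segment of the extension `λ·z` over `[p,q]`. -/
noncomputable def extSeg (hz : z.vert 0 = Λ.src lam) (p q : Fin k → ℕ) (hpq : p ≤ q) : Hom :=
  (extPred_exists lam z hz hpq).choose

theorem extSeg_spec (hz : z.vert 0 = Λ.src lam) (p q : Fin k → ℕ) (hpq : p ≤ q) :
    ExtPred lam z p q (extSeg lam z hz p q hpq) :=
  (extPred_exists lam z hz hpq).choose_spec

theorem extSeg_comp (hz : z.vert 0 = Λ.src lam) {p q r : Fin k → ℕ} (h1 : p ≤ q) (h2 : q ≤ r) :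
    Λ.src (extSeg lam z hz p q h1) = Λ.rng (extSeg lam z hz q r h2) ∧
    Λ.comp (extSeg lam z hz p q h1) (extSeg lam z hz q r h2) =
      extSeg lam z hz p r (h1.trans h2) := by
  obtain ⟨a, b, sa, se, hc, hda, hde, hdb⟩ := extSeg_spec lam z hz p q h1
  obtain ⟨a', b', sa', se', hc', hda', hde', hdb'⟩ := extSeg_spec lam z hz q r h2
  set e := extSeg lam z hz p q h1 with he_def
  set e' := extSeg lam z hz q r h2 with he'_def
  set czr := z.seg q r h2 with hczr
  -- source of b is z.vert q
  have hsb : Λ.src b = Λ.rng czr := by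
    have h3 : Λ.src (Λ.comp a (Λ.comp e b)) = Λ.src b := by
      rw [Λ.src_comp _ _ (by rw [sa, Λ.rng_comp _ _ se]), Λ.src_comp _ _ se]
    rw [← h3, hc, big, Λ.src_comp _ _ (src_lam_rng lam z hz q), z.src_seg, hczr, z.rng_seg]
  -- big r rewritten through the p,q decomposition
  have hbigr : Λ.comp (Λ.comp a e) (Λ.comp b czr) = big lam z r := by
    rw [Λ.comp_assoc a e (Λ.comp b czr) sa (by rw [se, ← Λ.rng_comp b czr hsb]),
      ← Λ.comp_assoc e b czr se hsb,
      ← Λ.comp_assoc a (Λ.comp e b) czr (by rw [sa, Λ.rng_comp _ _ se])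
        (by rw [Λ.src_comp _ _ se]; exact hsb),
      hc, hczr, big_comp lam z hz h2]
  -- compare prefixes of degree q
  have hfu := factor_unique (lam := big lam z r)
    (a := Λ.comp a e) (b := Λ.comp b czr)
    (by rw [Λ.src_comp _ _ sa, se, Λ.rng_comp _ _ hsb]) hbigr
    (a' := a') (b' := Λ.comp e' b') (by rw [sa', Λ.rng_comp _ _ se']) hc'
    (by rw [Λ.d_comp _ _ sa, hda, hde, pi_add_sub h1, hda'])
    (by rw [Λ.d_comp _ _ hsb, Λ.d_comp _ _ se', hdb, hczr, z.d_seg, hde', hdb', add_comm])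
  have hsrc : Λ.src e = Λ.rng e' := by
    have h5 := Λ.src_comp a e sa
    rw [hfu.1, sa'] at h5
    exact h5.symm
  refine ⟨hsrc, extPred_uniq lam z ?_ (extSeg_spec lam z hz p r (h1.trans h2))⟩
  refine ⟨a, b', by rw [sa, Λ.rng_comp _ _ hsrc], by rw [Λ.src_comp _ _ hsrc, se'], ?_,
    hda, ?_, hdb'⟩
  · rw [Λ.comp_assoc e e' b' hsrc se', ← hfu.2,
      ← Λ.comp_assoc a e (Λ.comp b czr) sa (by rw [se, Λ.rng_comp b czr hsb]), hbigr]
  · rw [Λ.d_comp _ _ hsrc, hde, hde']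
    funext i
    have h3 : p i ≤ q i := h1 i; have h4 : q i ≤ r i := h2 i
    simp only [Pi.add_apply, Pi.sub_apply]
    omega

/-- The infinite path `λ·z`. -/
noncomputable def extPath (hz : z.vert 0 = Λ.src lam) : InfPath Λ where
  vert p := Λ.rng (extSeg lam z hz p p le_rfl)
  seg := extSeg lam z hz
  rng_seg p q h := by
    obtain ⟨h1, h2⟩ := extSeg_comp lam z hz (le_refl p) h
    rw [← h2]
    exact Λ.rng_comp _ _ h1
  src_seg p q h := (extSeg_comp lam z hz h (le_refl q)).1
  d_seg p q h := by
    obtain ⟨a, b, _, _, _, _, hde, _⟩ := extSeg_spec lam z hz p q h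
    exact hde
  comp_seg p q r h1 h2 := (extSeg_comp lam z hz h1 h2).2

theorem extSeg_big (hz : z.vert 0 = Λ.src lam) (q : Fin k → ℕ) :
    extSeg lam z hz 0 (Λ.d lam + q) zero_le = big lam z q := by
  refine extPred_uniq lam z (extSeg_spec lam z hz _ _ _) ?_
  have hqle : q ≤ Λ.d lam + q := le_add_self
  have hsrc : Λ.src (big lam z q) = Λ.rng (z.seg q (Λ.d lam + q) hqle) := by
    rw [big, Λ.src_comp _ _ (src_lam_rng lam z hz q), z.src_seg, z.rng_seg]
  refine ⟨Λ.idm (Λ.rng (big lam z q)), z.seg q (Λ.d lam + q) hqle,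
    Λ.src_idm _, hsrc, ?_, Λ.d_idm _, by rw [d_big lam z hz, pi_sub_zero], ?_⟩
  · rw [show Λ.rng (big lam z q) = Λ.rng (Λ.comp (big lam z q) (z.seg q (Λ.d lam + q) hqle))
      from (Λ.rng_comp _ _ hsrc).symm, Λ.idm_comp, big_comp lam z hz hqle]
  · rw [z.d_seg, pi_add_sub_right]

theorem extPath_extendsTo (hz : z.vert 0 = Λ.src lam) :
    ExtendsTo Λ lam z (extPath lam z hz) := by
  constructor
  · show Λ.rng (extSeg lam z hz 0 0 le_rfl) = Λ.rng lam
    have h := (extPath lam z hz).rng_seg 0 (Λ.d lam + 0) zero_le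
    have h2 : Λ.rng (extSeg lam z hz 0 (Λ.d lam + 0) zero_le) =
        Λ.rng (extSeg lam z hz 0 0 le_rfl) := h
    rw [← h2, extSeg_big lam z hz 0, big]
    exact Λ.rng_comp _ _ (src_lam_rng lam z hz 0)
  · intro q
    show extSeg lam z hz 0 (Λ.d lam + q) zero_le = _
    rw [extSeg_big lam z hz q]
    rfl

end Extend

section Prefixes

theorem isSegment_prefix {lam μ : Hom} {m : Fin k → ℕ} (h : IsSegment Λ lam μ 0 m) :
    ∃ b, Λ.src μ = Λ.rng b ∧ Λ.comp μ b = lam ∧ Λ.d μ = m := by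
  obtain ⟨a, b, sa, sb, hc, hda, hdμ⟩ := h
  have ha : a = Λ.idm (Λ.rng a) := eq_idm_of_d_eq_zero hda
  have hsa : Λ.src a = Λ.rng a := by conv_lhs => rw [ha, Λ.src_idm]
  have hrng : Λ.rng a = Λ.rng (Λ.comp μ b) := by rw [← hsa, sa, Λ.rng_comp _ _ sb]
  have hcomp : Λ.comp μ b = lam := by
    have h6 : Λ.comp a (Λ.comp μ b) = Λ.comp μ b := by
      conv_lhs => rw [ha, hrng]
      exact Λ.idm_comp _
    rw [← hc, h6]
  exact ⟨b, sb, hcomp, by rw [hdμ, pi_sub_zero]⟩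

theorem prefix_eq_seg (y : InfPath Λ) {lam μ : Hom} {m P : Fin k → ℕ} (hmP : m ≤ P)
    (hy : y.seg 0 P zero_le = lam) (h : IsSegment Λ lam μ 0 m) :
    μ = y.seg 0 m zero_le := by
  obtain ⟨b, sμ, hc, hdμ⟩ := isSegment_prefix h
  have hdb : Λ.d b = P - m := by
    have h1 : Λ.d lam = m + Λ.d b := by rw [← hc, Λ.d_comp _ _ sμ, hdμ]
    have h2 : Λ.d lam = P := by rw [← hy, y.d_seg, pi_sub_zero]
    funext i
    have h3 := congrFun (h1.symm.trans h2) i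
    have h4 : m i ≤ P i := hmP i
    simp only [Pi.add_apply, Pi.sub_apply] at h3 ⊢
    omega
  exact (factor_unique sμ hc (by rw [y.src_seg, y.rng_seg])
    ((y.comp_seg 0 m P zero_le hmP).trans hy)
    (by rw [hdμ, y.d_seg, pi_sub_zero]) (by rw [hdb, y.d_seg])).1

theorem extendsTo_shift (y : InfPath Λ) (m : Fin k → ℕ) :
    ExtendsTo Λ (y.seg 0 m zero_le) (InfPath.shift Λ m y) y := by
  refine ⟨by rw [y.rng_seg], fun q => ?_⟩
  have hd : Λ.d (y.seg 0 m zero_le) = m := by rw [y.d_seg, pi_sub_zero]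
  have e1 : y.seg 0 (Λ.d (y.seg 0 m zero_le) + q) zero_le =
      y.seg 0 (m + q) zero_le := seg_congr y rfl (by rw [hd]) _ _
  have e2 : (InfPath.shift Λ m y).seg 0 q zero_le = y.seg m (m + q) le_self_add :=
    seg_congr y (add_zero m) rfl _ _
  rw [e1, e2, y.comp_seg 0 m (m + q) zero_le le_self_add]

theorem shift_m_eq_shift_n {v : Obj} {m n : Fin k → ℕ}
    (hper : ∀ lam : Hom, Λ.rng lam = v → m ⊔ n ≤ Λ.d lam →
      ∀ s1 s2 : Hom, IsSegment Λ lam s1 m (m + (Λ.d lam - (m ⊔ n))) →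
        IsSegment Λ lam s2 n (n + (Λ.d lam - (m ⊔ n))) → s1 = s2)
    (x : InfPath Λ) (hx : x.vert 0 = v) :
    InfPath.shift Λ m x = InfPath.shift Λ n x := by
  have key : ∀ q : Fin k → ℕ, x.seg m (m + q) le_self_add = x.seg n (n + q) le_self_add := by
    intro q
    have hdL : Λ.d (x.seg 0 (m ⊔ n + q) zero_le) = m ⊔ n + q := by
      rw [x.d_seg, pi_sub_zero]
    have hsub : Λ.d (x.seg 0 (m ⊔ n + q) zero_le) - (m ⊔ n) = q := by
      rw [hdL]; exact pi_add_sub_left _ _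
    have hmle : m + q ≤ m ⊔ n + q := add_le_add_left le_sup_left q
    have hnle : n + q ≤ m ⊔ n + q := add_le_add_left le_sup_right q
    refine hper (x.seg 0 (m ⊔ n + q) zero_le) (by rw [x.rng_seg, hx])
      (by rw [hdL]; exact le_self_add) _ _ ?_ ?_
    · rw [hsub]
      exact ⟨x.seg 0 m zero_le, x.seg (m + q) (m ⊔ n + q) hmle,
        by rw [x.src_seg, x.rng_seg], by rw [x.src_seg, x.rng_seg],
        by rw [x.comp_seg m (m + q) (m ⊔ n + q) le_self_add hmle,
          x.comp_seg 0 m (m ⊔ n + q) zero_le (le_self_add.trans hmle)],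
        by rw [x.d_seg, pi_sub_zero], x.d_seg _ _ _⟩
    · rw [hsub]
      exact ⟨x.seg 0 n zero_le, x.seg (n + q) (m ⊔ n + q) hnle,
        by rw [x.src_seg, x.rng_seg], by rw [x.src_seg, x.rng_seg],
        by rw [x.comp_seg n (n + q) (m ⊔ n + q) le_self_add hnle,
          x.comp_seg 0 n (m ⊔ n + q) zero_le (le_self_add.trans hnle)],
        by rw [x.d_seg, pi_sub_zero], x.d_seg _ _ _⟩
  have key2 : ∀ (q r : Fin k → ℕ) (h : q ≤ r),
      x.seg (m + q) (m + r) (add_le_add_right h m) =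
      x.seg (n + q) (n + r) (add_le_add_right h n) := by
    intro q r h
    refine (factor_unique (lam := x.seg m (m + r) le_self_add)
      (a := x.seg m (m + q) le_self_add) (b := x.seg (m + q) (m + r) (add_le_add_right h m))
      (by rw [x.src_seg, x.rng_seg]) (x.comp_seg m (m + q) (m + r) le_self_add _)
      (a' := x.seg n (n + q) le_self_add) (b' := x.seg (n + q) (n + r) (add_le_add_right h n))
      (by rw [x.src_seg, x.rng_seg])
      ((x.comp_seg n (n + q) (n + r) le_self_add _).trans (key r).symm)
      (by rw [x.d_seg, x.d_seg, pi_add_sub_left, pi_add_sub_left])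
      (by rw [x.d_seg, x.d_seg]
          funext i
          simp only [Pi.sub_apply, Pi.add_apply, Nat.add_sub_add_left])).2
  have keyv : ∀ q, x.vert (m + q) = x.vert (n + q) := by
    intro q
    rw [← x.src_seg m (m + q) le_self_add, key q, x.src_seg]
  exact InfPath.ext' (funext fun q => keyv q) (fun p q h => key2 p q h)

end Prefixes

end Helpers

set_option maxHeartbeats 2000000 in
/-- If `Λ` is a row-finite `k`-graph with no sources which is not aperiodic —
witnessed at `v` by distinct `m, n` — then every infinite path based at `v`
satisfies `σ^m x = σ^n x`, and consequently the infinite-path representation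
`π_S` of `C*(Λ)` on `ℓ²(Λ^∞)` is not injective: for `λ ∈ vΛ^{m∨n}`,
`μ = λ(0,m)`, `ν = λ(0,n)`, the element
`s_λ s_λ* − s_μ s_ν* s_λ s_λ*` is a nonzero element of `ker π_S`. -/
theorem not_aperiodic_infinite_path_rep_not_injective
    {k : ℕ} {Obj Hom : Type} (Λ : KGraph k Obj Hom)
    (hRF : RowFinite Λ) (hNS : NoSources Λ)
    (v : Obj) (m n : Fin k → ℕ) (hmn : m ≠ n)
    (hper : ∀ lam : Hom, Λ.rng lam = v → m ⊔ n ≤ Λ.d lam →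
      ∀ s1 s2 : Hom, IsSegment Λ lam s1 m (m + (Λ.d lam - (m ⊔ n))) →
        IsSegment Λ lam s2 n (n + (Λ.d lam - (m ⊔ n))) → s1 = s2)
    [DecidableEq (InfPath Λ)]
    {B : Type} [NormedRing B] [StarRing B] [CStarRing B] [NormedAlgebra ℂ B]
    [StarModule ℂ B] [CompleteSpace B]
    (s : Hom → B) (hCK : IsCKFamily Λ s) (hnz : ∀ w : Obj, s (Λ.idm w) ≠ 0)
    (hgauge : ∀ z : Fin k → ℂ, (∀ i, ‖z i‖ = 1) →
      ∃ γ : B →⋆ₐ[ℂ] B, ∀ h : Hom, γ (s h) = (∏ i, z i ^ Λ.d h i) • s h)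
    (π : B →⋆ₐ[ℂ] ((lp (fun _ : InfPath Λ => ℂ) 2) →L[ℂ] (lp (fun _ : InfPath Λ => ℂ) 2)))
    (hπ1 : ∀ (lam : Hom) (x y : InfPath Λ), x.vert 0 = Λ.src lam →
      ExtendsTo Λ lam x y →
      π (s lam) (lp.single 2 x (1 : ℂ)) = lp.single 2 y (1 : ℂ))
    (hπ0 : ∀ (lam : Hom) (x : InfPath Λ), x.vert 0 ≠ Λ.src lam →
      π (s lam) (lp.single 2 x (1 : ℂ)) = 0)
    (lam μ ν : Hom) (hr : Λ.rng lam = v) (hd : Λ.d lam = m ⊔ n)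
    (hμ : IsSegment Λ lam μ 0 m) (hν : IsSegment Λ lam ν 0 n) :
    (∀ x : InfPath Λ, x.vert 0 = v → InfPath.shift Λ m x = InfPath.shift Λ n x) ∧
    s lam * star (s lam) - s μ * star (s ν) * (s lam * star (s lam)) ≠ 0 ∧
    π (s lam * star (s lam) - s μ * star (s ν) * (s lam * star (s lam))) = 0 ∧
    ¬ Function.Injective π := by
  have hshift : ∀ x : InfPath Λ, x.vert 0 = v →
      InfPath.shift Λ m x = InfPath.shift Λ n x :=
    fun x hx => shift_m_eq_shift_n hper x hx
  -- degrees of the two prefixes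
  have hdμm : Λ.d μ = m := (isSegment_prefix hμ).choose_spec.2.2
  have hdνn : Λ.d ν = n := (isSegment_prefix hν).choose_spec.2.2
  -- π of a vertex projection fixes basis vectors based at that vertex
  have hidm : ∀ (w : Obj) (x : InfPath Λ), x.vert 0 = w →
      π (s (Λ.idm w)) (lp.single 2 x (1 : ℂ)) = lp.single 2 x (1 : ℂ) := by
    intro w x hx
    refine hπ1 _ x x (by rw [hx, Λ.src_idm]) ⟨by rw [hx, Λ.rng_idm], fun q => ?_⟩
    have e1 : x.seg 0 (Λ.d (Λ.idm w) + q) zero_le = x.seg 0 q zero_le :=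
      seg_congr x rfl (by rw [Λ.d_idm, zero_add]) _ _
    rw [e1, ← hx, ← x.rng_seg 0 q zero_le, Λ.idm_comp]
  -- the operator π (s λ − s μ s ν* s λ) kills every basis vector
  have hT : ∀ zp : InfPath Λ,
      π (s lam - s μ * star (s ν) * s lam) (lp.single 2 zp (1 : ℂ)) = 0 := by
    intro zp
    rw [map_sub, map_mul, map_mul, ContinuousLinearMap.sub_apply,
      ContinuousLinearMap.mul_apply, ContinuousLinearMap.mul_apply]
    by_cases hzp : zp.vert 0 = Λ.src lam
    · have hy := extPath_extendsTo lam zp hzp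
      set y := extPath lam zp hzp with hy_def
      have hsy : π (s lam) (lp.single 2 zp (1 : ℂ)) = lp.single 2 y (1 : ℂ) :=
        hπ1 _ _ _ hzp hy
      have hyv : y.vert 0 = v := by rw [hy.1, hr]
      have hylam : y.seg 0 (m ⊔ n) zero_le = lam := by
        have h2 := hy.2 0
        have hz00 : zp.seg 0 0 zero_le = Λ.idm (Λ.src lam) := by
          have hd0 : Λ.d (zp.seg 0 0 zero_le) = 0 := by
            rw [zp.d_seg]; exact pi_sub_zero 0
          rw [eq_idm_of_d_eq_zero hd0, zp.rng_seg, hzp]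
        rw [hz00, Λ.comp_idm] at h2
        exact (seg_congr y rfl (by rw [hd, add_zero]) _ _).trans h2
      have hμy : μ = y.seg 0 m zero_le := prefix_eq_seg y le_sup_left hylam hμ
      have hνy : ν = y.seg 0 n zero_le := prefix_eq_seg y le_sup_right hylam hν
      have hwv : (InfPath.shift Λ n y).vert 0 = Λ.src ν := by
        rw [hνy, y.src_seg]
        exact congrArg y.vert (add_zero n)
      have hsν : π (s ν) (lp.single 2 (InfPath.shift Λ n y) (1 : ℂ)) =
          lp.single 2 y (1 : ℂ) :=
        hπ1 _ _ _ hwv (by rw [hνy]; exact extendsTo_shift y n)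
      have hstar : π (star (s ν)) (lp.single 2 y (1 : ℂ)) =
          lp.single 2 (InfPath.shift Λ n y) (1 : ℂ) := by
        rw [← hsν, ← ContinuousLinearMap.mul_apply, ← map_mul, hCK.star_mul_self]
        exact hidm _ _ hwv
      have hμv : (InfPath.shift Λ m y).vert 0 = Λ.src μ := by
        rw [hμy, y.src_seg]
        exact congrArg y.vert (add_zero m)
      have hsμ : π (s μ) (lp.single 2 (InfPath.shift Λ m y) (1 : ℂ)) =
          lp.single 2 y (1 : ℂ) :=
        hπ1 _ _ _ hμv (by rw [hμy]; exact extendsTo_shift y m)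
      rw [hsy, hstar, ← hshift y hyv, hsμ, sub_self]
    · rw [hπ0 _ _ hzp, map_zero, map_zero, sub_self]
  -- hence that operator is zero
  have hT0 : π (s lam - s μ * star (s ν) * s lam) = 0 := by
    apply ContinuousLinearMap.ext
    intro f
    have hsum := lp.hasSum_single (E := fun _ : InfPath Λ => ℂ) (p := 2) (by norm_num) f
    have hmap := hsum.mapL (π (s lam - s μ * star (s ν) * s lam))
    have hzero : ∀ x : InfPath Λ,
        π (s lam - s μ * star (s ν) * s lam) (lp.single 2 x (f x)) = 0 := by
      intro x
      have hsingle : lp.single 2 x (f x) =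
          f x • (lp.single 2 x (1 : ℂ) : lp (fun _ : InfPath Λ => ℂ) 2) := by
        rw [← lp.single_smul, smul_eq_mul, mul_one]
      rw [hsingle, map_smul, hT x, smul_zero]
    simp only [hzero] at hmap
    rw [ContinuousLinearMap.zero_apply]
    exact hmap.unique hasSum_zero
  -- π kills the element
  have hπe : π (s lam * star (s lam) - s μ * star (s ν) * (s lam * star (s lam))) = 0 := by
    have hfac : s lam * star (s lam) - s μ * star (s ν) * (s lam * star (s lam)) =
        (s lam - s μ * star (s ν) * s lam) * star (s lam) := by
      simp only [sub_mul, mul_assoc]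
    rw [hfac, map_mul, hT0, zero_mul]
  -- the element is nonzero, via the gauge action
  have hne : s lam * star (s lam) - s μ * star (s ν) * (s lam * star (s lam)) ≠ 0 := by
    intro h0
    have hQP : s lam * star (s lam) = s μ * star (s ν) * (s lam * star (s lam)) :=
      sub_eq_zero.mp h0
    obtain ⟨i, hi⟩ : ∃ i, m i ≠ n i := Function.ne_iff.mp hmn
    set θ : ℝ := Real.pi / ((m i : ℝ) + (n i : ℝ) + 1) with hθ_def
    have hden : (0:ℝ) < (m i : ℝ) + (n i : ℝ) + 1 := by positivity
    have hθpos : 0 < θ := div_pos Real.pi_pos hden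
    set ω : ℂ := Complex.exp ((θ : ℝ) * Complex.I) with hω_def
    set z : Fin k → ℂ := fun j => if j = i then ω else 1 with hz_def
    have hz1 : ∀ j, ‖z j‖ = 1 := by
      intro j
      by_cases hj : j = i
      · simp only [hz_def, hj, if_pos rfl]
        exact Complex.norm_exp_ofReal_mul_I θ
      · simp [hz_def, hj]
    obtain ⟨γ, hγ⟩ := hgauge z hz1
    have hc : ∀ h : Hom, (∏ j, z j ^ Λ.d h j) = ω ^ Λ.d h i := by
      intro h
      rw [Finset.prod_eq_single i (fun j _ hji => by simp [hz_def, hji])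
        (fun hni => absurd (Finset.mem_univ i) hni)]
      simp [hz_def]
    have hωconj : ω * star ω = 1 := by
      have habs : ‖ω‖ = 1 := Complex.norm_exp_ofReal_mul_I θ
      rw [show star ω = (starRingEnd ℂ) ω from rfl, Complex.mul_conj]
      rw [Complex.normSq_eq_norm_sq, habs]
      norm_num
    have hγP : γ (s lam * star (s lam)) = s lam * star (s lam) := by
      rw [map_mul, map_star, hγ, hc, star_smul, smul_mul_smul_comm, star_pow,
        ← mul_pow, hωconj, one_pow, one_smul]
    have hγQP : γ (s μ * star (s ν) * (s lam * star (s lam))) =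
        (ω ^ m i * star ω ^ n i) • (s μ * star (s ν) * (s lam * star (s lam))) := by
      rw [map_mul, hγP, map_mul, map_star, hγ, hγ, hc, hc, hdμm, hdνn, star_smul,
        star_pow, smul_mul_smul_comm, smul_mul_assoc]
    have hkey : s lam * star (s lam) =
        (ω ^ m i * star ω ^ n i) • (s lam * star (s lam)) := by
      have := congrArg γ hQP
      rw [hγP, hγQP, ← hQP] at this
      exact this
    have hαne : ω ^ m i * star ω ^ n i ≠ 1 := by
      have hconj : star ω = Complex.exp ((-θ : ℝ) * Complex.I) := by
        rw [hω_def, show (star (Complex.exp ((θ:ℝ) * Complex.I)) : ℂ) =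
          (starRingEnd ℂ) (Complex.exp ((θ:ℝ) * Complex.I)) from rfl,
          ← Complex.exp_conj, map_mul, Complex.conj_ofReal, Complex.conj_I]
        push_cast
        ring_nf
      rw [hconj, hω_def, ← Complex.exp_nat_mul, ← Complex.exp_nat_mul, ← Complex.exp_add]
      intro hα
      obtain ⟨N, hN⟩ := Complex.exp_eq_one_iff.mp hα
      have hre : (m i : ℝ) * θ + (n i : ℝ) * (-θ) = (N : ℝ) * (2 * Real.pi) := by
        have h2 : (((m i : ℝ) * θ + (n i : ℝ) * (-θ) : ℝ) : ℂ) * Complex.I =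
            (((N : ℝ) * (2 * Real.pi) : ℝ) : ℂ) * Complex.I := by
          rw [show ((((m i : ℝ) * θ + (n i : ℝ) * (-θ) : ℝ)) : ℂ) * Complex.I =
            (m i : ℂ) * ((θ:ℝ) * Complex.I) + (n i : ℂ) * ((-θ:ℝ) * Complex.I) by
              push_cast; ring]
          rw [hN]
          push_cast
          ring
        exact_mod_cast Complex.ofReal_inj.mp (mul_right_cancel₀ Complex.I_ne_zero h2)
      -- real arithmetic contradiction
      have hane : (m i : ℝ) ≠ (n i : ℝ) := by exact_mod_cast hi
      by_cases hN0 : N = 0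
      · rw [hN0] at hre
        have h3 : ((m i : ℝ) - (n i : ℝ)) * θ = 0 := by
          push_cast at hre ⊢
          linarith
        rcases mul_eq_zero.mp h3 with h4 | h4
        · exact hane (by linarith [sub_eq_zero.mp h4])
        · exact hθpos.ne' h4
      · have h1 : (1:ℝ) ≤ |(N : ℝ)| := by
          rw [← Int.cast_abs]
          exact_mod_cast Int.one_le_abs (by exact_mod_cast hN0)
        have h2 : |((m i : ℝ) - (n i : ℝ)) * θ| = |(N:ℝ)| * (2 * Real.pi) := by
          rw [show ((m i : ℝ) - (n i : ℝ)) * θ = (N : ℝ) * (2 * Real.pi) by linarith,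
            abs_mul, abs_of_pos (by positivity : (0:ℝ) < 2 * Real.pi)]
        have h3 : |(m i : ℝ) - (n i : ℝ)| ≤ (m i : ℝ) + (n i : ℝ) := by
          rw [abs_le]
          constructor <;> nlinarith [Nat.cast_nonneg (α := ℝ) (m i),
            Nat.cast_nonneg (α := ℝ) (n i)]
        have h4 : ((m i : ℝ) + (n i : ℝ)) * θ < Real.pi := by
          have h6 : ((m i : ℝ) + (n i : ℝ)) * (Real.pi / ((m i : ℝ) + (n i : ℝ) + 1)) =
              ((m i : ℝ) + (n i : ℝ)) * Real.pi / ((m i : ℝ) + (n i : ℝ) + 1) := by ring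
          rw [hθ_def, h6, div_lt_iff₀ hden]
          nlinarith [Real.pi_pos, Nat.cast_nonneg (α := ℝ) (m i),
            Nat.cast_nonneg (α := ℝ) (n i)]
        have h5 : |((m i : ℝ) - (n i : ℝ)) * θ| ≤ ((m i : ℝ) + (n i : ℝ)) * θ := by
          rw [abs_mul, abs_of_pos hθpos]
          exact mul_le_mul_of_nonneg_right h3 hθpos.le
        nlinarith [Real.pi_pos]
    have hP0 : s lam * star (s lam) = 0 := by
      have h1 : (1 - ω ^ m i * star ω ^ n i) • (s lam * star (s lam)) = 0 := by
        rw [sub_smul, one_smul, ← hkey, sub_self]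
      rcases smul_eq_zero.mp h1 with h2 | h2
      · exact absurd (sub_eq_zero.mp h2).symm hαne
      · exact h2
    have hs0 : s lam = 0 := by
      have h1 := hCK.partial_isometry lam
      rw [hP0, zero_mul] at h1
      exact h1.symm
    have h2 := hCK.star_mul_self lam
    rw [hs0, mul_zero] at h2
    exact hnz _ h2.symm
  exact ⟨hshift, hne, hπe, fun hinj => hne (hinj (by rw [hπe, map_zero]))⟩

end Paper
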